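/- If f(r) = r²/L² − 8πM*/r + 4πQ*²/r² has a double root at r_h > 0 (extremal case), then the Kretschmann scalar expression 8(96π²L⁴M*²r² − 192π²L⁴M*Q*²r + 112π²L⁴Q*⁴ + 3r⁸)/(r⁸L⁴) evaluated at r = r_h equals 144/L⁴. -/

import Mathlib

open Real

/-- At an extremal (double) horizon root, the Kretschmann scalar equals 144/L⁴. -/
theorem stmt1 (L Ms Qs rh : ℝ) (hL : 0 < L) (hM : 0 < Ms) (hQ : 0 < Qs) (hr : 0 < rh)
    (h0 : rh^2/L^2 - 8*π*Ms/rh + 4*π*Qs^2/rh^2 = 0)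
    (h1 : deriv (fun r : ℝ => r^2/L^2 - 8*π*Ms/r + 4*π*Qs^2/r^2) rh = 0) :
    8*(96*π^2*L^4*Ms^2*rh^2 - 192*π^2*L^4*Ms*Qs^2*rh + 112*π^2*L^4*Qs^4 + 3*rh^8)
      / (rh^8*L^4) = 144/L^4 := by
  have hrne : rh ≠ 0 := hr.ne'
  have hLne : L ≠ 0 := hL.ne'
  have A : HasDerivAt (fun r : ℝ => r^2/L^2) (2*rh/L^2) rh := by
    simpa using (hasDerivAt_pow 2 rh).div_const (L^2)
  have B : HasDerivAt (fun r : ℝ => 8*π*Ms/r) (-(8*π*Ms)/rh^2) rh := by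
    have := (hasDerivAt_inv hrne).const_mul (8*π*Ms)
    simpa [div_eq_mul_inv, mul_neg, neg_div, mul_comm, mul_left_comm] using this
  have C : HasDerivAt (fun r : ℝ => 4*π*Qs^2/r^2) (-(4*π*Qs^2)*(2*rh)/(rh^2)^2) rh := by
    have h2 : HasDerivAt (fun r : ℝ => r^2) (2*rh) rh := by
      simpa using hasDerivAt_pow 2 rh
    have := (h2.inv (pow_ne_zero 2 hrne)).const_mul (4*π*Qs^2)
    simpa [div_eq_mul_inv, mul_neg, neg_div, mul_comm, mul_left_comm, mul_assoc] using this
  have hd : deriv (fun r : ℝ => r^2/L^2 - 8*π*Ms/r + 4*π*Qs^2/r^2) rh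
      = 2*rh/L^2 - (-(8*π*Ms)/rh^2) + (-(4*π*Qs^2)*(2*rh)/(rh^2)^2) := by
    exact ((A.sub B).add C).deriv
  rw [hd] at h1
  -- clear denominators in the hypotheses
  have e0 : rh^4 - 8*π*Ms*rh*L^2 + 4*π*Qs^2*L^2 = 0 := by
    apply mul_left_cancel₀ hrne
    field_simp at h0
    linear_combination rh * h0
  have e1 : 2*rh^4 + 8*π*Ms*rh*L^2 - 8*π*Qs^2*L^2 = 0 := by
    apply mul_left_cancel₀ (pow_ne_zero 3 hrne)
    field_simp at h1
    linear_combination rh^3 * h1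
  have hpm : π*Ms*rh*L^2 = rh^4/2 := by linarith
  have hpq : π*Qs^2*L^2 = 3*rh^4/4 := by linarith
  have hnum : 96*π^2*L^4*Ms^2*rh^2 - 192*π^2*L^4*Ms*Qs^2*rh + 112*π^2*L^4*Qs^4 + 3*rh^8
      = 18*rh^8 := by
    linear_combination (96*(π*Ms*rh*L^2) + 48*rh^4 - 192*(π*Qs^2*L^2))*hpm
      + (112*(π*Qs^2*L^2) - 12*rh^4)*hpq
  rw [hnum]
  field_simp
  ring
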